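/- Let A : H₁ → H₂ be bounded linear with ‖A‖ > 0 and Q ⊆ H₂ nonempty closed convex. The proximity function f(x) := (1/2)‖P_Q(Ax) − Ax‖² is convex and differentiable with gradient ∇f(x) = A*(Ax − P_Q(Ax)); moreover the fixed points of the Landweber operator V := Id + ‖A‖⁻² A*(P_Q − Id)A are exactly the minimizers of f over H₁. -/

import Mathlib

set_option maxHeartbeats 1000000

open scoped RealInnerProductSpace

theorem stmt_16 {H₁ H₂ : Type*} [NormedAddCommGroup H₁] [InnerProductSpace ℝ H₁]
    [CompleteSpace H₁] [NormedAddCommGroup H₂] [InnerProductSpace ℝ H₂] [CompleteSpace H₂]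
    (A : H₁ →L[ℝ] H₂) (hA : ‖A‖ > 0)
    (Q : Set H₂) (hQne : Q.Nonempty) (hQc : IsClosed Q) (hQconv : Convex ℝ Q)
    (PQ : H₂ → H₂)
    (hPQ : ∀ y : H₂, PQ y ∈ Q ∧ ∀ w ∈ Q, ‖PQ y - y‖ ≤ ‖w - y‖)
    (f : H₁ → ℝ)
    (hf : ∀ x : H₁, f x = (1 / 2) * ‖PQ (A x) - A x‖ ^ 2)
    (V : H₁ → H₁)
    (hV : ∀ x : H₁, V x = x + (‖A‖ ^ 2)⁻¹ • (ContinuousLinearMap.adjoint A) (PQ (A x) - A x)) :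
    ConvexOn ℝ Set.univ f ∧
      (∀ x : H₁, HasGradientAt f ((ContinuousLinearMap.adjoint A) (A x - PQ (A x))) x) ∧
      (∀ x : H₁, V x = x ↔ ∀ y : H₁, f x ≤ f y) := by
  set B := ContinuousLinearMap.adjoint A with hB
  set g : H₁ → H₁ := fun x => B (A x - PQ (A x)) with hg
  -- variational inequality for the projection
  have hvar : ∀ z : H₂, ∀ w ∈ Q, ⟪z - PQ z, w - PQ z⟫ ≤ 0 := by
    intro z w hw
    have hp := (hPQ z).1
    haveI : Nonempty Q := hQne.to_subtype
    have heq : ‖z - PQ z‖ = ⨅ w : Q, ‖z - w‖ := by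
      apply le_antisymm
      · apply le_ciInf
        intro w
        have := (hPQ z).2 w w.2
        rw [norm_sub_rev]
        rwa [norm_sub_rev (w : H₂) z] at this
      · have hbdd : BddBelow (Set.range fun w : Q => ‖z - (w : H₂)‖) := by
          refine ⟨0, ?_⟩
          rintro r ⟨w, rfl⟩
          exact norm_nonneg _
        exact ciInf_le hbdd ⟨PQ z, hp⟩
    exact (norm_eq_iInf_iff_real_inner_le_zero hQconv hp).mp heq w hw
  -- inner product of gradient with direction
  have hginner : ∀ x y : H₁, ⟪g x, y - x⟫ = ⟪A x - PQ (A x), A y - A x⟫ := by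
    intro x y
    rw [hg]
    rw [ContinuousLinearMap.adjoint_inner_left, map_sub]
  -- lower bound : gradient inequality (convexity)
  have gineq₁ : ∀ x y : H₁, f x + ⟪g x, y - x⟫ ≤ f y := by
    intro x y
    have hq := (hPQ (A y)).1
    have hv := hvar (A x) (PQ (A y)) hq
    rw [hf x, hf y, hginner x y]
    set z := A x
    set u := A y
    set p := PQ z
    set q := PQ u
    have hdec : u - z = (u - q) - (z - p) + (q - p) := by abel
    have hrw : ⟪z - p, u - z⟫ = ⟪z - p, u - q⟫ - ⟪z - p, z - p⟫ + ⟪z - p, q - p⟫ := by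
      rw [hdec, inner_add_right, inner_sub_right]
    have hbb : ⟪z - p, z - p⟫ = ‖z - p‖ ^ 2 := real_inner_self_eq_norm_sq _
    have hsq : 0 ≤ ‖(u - q) - (z - p)‖ ^ 2 := sq_nonneg _
    have hexp : ‖(u - q) - (z - p)‖ ^ 2
        = ‖u - q‖ ^ 2 - 2 * ⟪u - q, z - p⟫ + ‖z - p‖ ^ 2 := norm_sub_sq_real _ _
    have hcomm : ⟪u - q, z - p⟫ = ⟪z - p, u - q⟫ := real_inner_comm _ _
    have h1 : ‖p - z‖ = ‖z - p‖ := norm_sub_rev _ _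
    have h2 : ‖q - u‖ = ‖u - q‖ := norm_sub_rev _ _
    rw [h1, h2, hrw, hbb]
    nlinarith [hsq, hexp, hcomm, hv]
  -- upper bound
  have gineq₂ : ∀ x y : H₁, f y ≤ f x + ⟪g x, y - x⟫ + (1/2) * ‖A y - A x‖ ^ 2 := by
    intro x y
    have hp := (hPQ (A x)).1
    have hle := (hPQ (A y)).2 (PQ (A x)) hp
    rw [hf x, hf y, hginner x y]
    set z := A x
    set u := A y
    set p := PQ z
    have hdec : p - u = (p - z) + (z - u) := by abel
    have hexp : ‖(p - z) + (z - u)‖ ^ 2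
        = ‖p - z‖ ^ 2 + 2 * ⟪p - z, z - u⟫ + ‖z - u‖ ^ 2 := norm_add_sq_real _ _
    have hneg : ⟪z - p, u - z⟫ = ⟪p - z, z - u⟫ := by
      rw [show z - p = -(p - z) by abel, show u - z = -(z - u) by abel, inner_neg_neg]
    have h3 : ‖u - z‖ = ‖z - u‖ := norm_sub_rev _ _
    have h4 : ‖PQ u - u‖ ≤ ‖p - u‖ := hle
    have h5 : ‖p - u‖ ^ 2 = ‖p - z‖ ^ 2 + 2 * ⟪p - z, z - u⟫ + ‖z - u‖ ^ 2 := by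
      rw [hdec]; exact hexp
    rw [hneg, h3]
    nlinarith [h4, h5, norm_nonneg (PQ u - u), norm_nonneg (p - u)]
  -- quadratic error bound for the gradient
  have herr : ∀ x y : H₁, |f y - f x - ⟪g x, y - x⟫| ≤ (1/2) * ‖A‖ ^ 2 * ‖y - x‖ ^ 2 := by
    intro x y
    have h1 := gineq₁ x y
    have h2 := gineq₂ x y
    have h3 : ‖A y - A x‖ ≤ ‖A‖ * ‖y - x‖ := by
      rw [← map_sub]; exact A.le_opNorm _
    have h4 : 0 ≤ ‖A y - A x‖ := norm_nonneg _
    have h5 : ‖A y - A x‖ ^ 2 ≤ (‖A‖ * ‖y - x‖) ^ 2 := pow_le_pow_left₀ h4 h3 2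
    have h6 : (‖A‖ * ‖y - x‖) ^ 2 = ‖A‖ ^ 2 * ‖y - x‖ ^ 2 := by ring
    have h7 : (0:ℝ) ≤ (1/2) * ‖A‖ ^ 2 * ‖y - x‖ ^ 2 := by positivity
    rw [abs_le]
    constructor
    · linarith
    · linarith
  -- gradient
  have hgrad : ∀ x : H₁, HasGradientAt f (g x) x := by
    intro x
    rw [hasGradientAt_iff_isLittleO]
    have hO : (fun y => f y - f x - ⟪g x, y - x⟫) =O[nhds x] (fun y => ‖y - x‖ ^ 2) := by
      apply Asymptotics.IsBigO.of_bound ((1/2) * ‖A‖ ^ 2)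
      filter_upwards with y
      rw [Real.norm_eq_abs, Real.norm_eq_abs, abs_of_nonneg (sq_nonneg ‖y - x‖)]
      exact herr x y
    have hlo : (fun y : H₁ => ‖y - x‖ ^ 2) =o[nhds x] (fun y => y - x) := by
      rw [Asymptotics.isLittleO_iff]
      intro c hc
      filter_upwards [Metric.closedBall_mem_nhds x hc] with y hy
      have h1 : ‖y - x‖ ≤ c := by rw [← dist_eq_norm]; exact hy
      rw [Real.norm_eq_abs, abs_of_nonneg (sq_nonneg ‖y - x‖)]
      calc ‖y - x‖ ^ 2 = ‖y - x‖ * ‖y - x‖ := sq ‖y - x‖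
        _ ≤ c * ‖y - x‖ := mul_le_mul_of_nonneg_right h1 (norm_nonneg _)
    exact hO.trans_isLittleO hlo
  refine ⟨?_, hgrad, ?_⟩
  · refine ⟨convex_univ, ?_⟩
    intro x _ y _ a b ha hb hab
    set m := a • x + b • y with hm
    have h1 := gineq₁ m x
    have h2 := gineq₁ m y
    have hz : a • (x - m) + b • (y - m) = 0 := by
      have : a • (x - m) + b • (y - m) = (a • x + b • y) - (a + b) • m := by
        rw [smul_sub, smul_sub, add_smul]; abel
      rw [this, hab, one_smul, ← hm, sub_self]
    have hin : a * ⟪g m, x - m⟫ + b * ⟪g m, y - m⟫ = 0 := by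
      have : a * ⟪g m, x - m⟫ + b * ⟪g m, y - m⟫
          = ⟪g m, a • (x - m) + b • (y - m)⟫ := by
        rw [inner_add_right, real_inner_smul_right, real_inner_smul_right]
      rw [this, hz, inner_zero_right]
    have hm1 := mul_le_mul_of_nonneg_left h1 ha
    have hm2 := mul_le_mul_of_nonneg_left h2 hb
    simp only [smul_eq_mul]
    have e1 : a * (f m + ⟪g m, x - m⟫) = a * f m + a * ⟪g m, x - m⟫ := by ring
    have e2 : b * (f m + ⟪g m, y - m⟫) = b * f m + b * ⟪g m, y - m⟫ := by ring
    have habm : a * f m + b * f m = f m := by rw [← add_mul, hab, one_mul]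
    linarith [hm1, hm2]
  · intro x
    have hAz : ‖A‖ ^ 2 ≠ 0 := by positivity
    have hBneg : B (PQ (A x) - A x) = - g x := by
      rw [hg, ← map_neg]
      congr 1
      abel
    constructor
    · intro h
      have h0 : (‖A‖ ^ 2)⁻¹ • B (PQ (A x) - A x) = 0 := by
        have hx : x + (‖A‖ ^ 2)⁻¹ • B (PQ (A x) - A x) = x := (hV x).symm.trans h
        exact add_eq_left.mp hx
      have hg0 : g x = 0 := by
        rcases smul_eq_zero.mp h0 with hc | hc
        · exact absurd hc (inv_ne_zero hAz)
        · rw [hBneg] at hc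
          simpa using hc
      intro y
      have := gineq₁ x y
      rw [hg0, inner_zero_left] at this
      linarith
    · intro h
      have hg0 : g x = 0 := by
        by_cases hgz : g x = 0
        · exact hgz
        · exfalso
          set G := ‖g x‖ ^ 2 with hG
          set C := ‖A (g x)‖ ^ 2 with hC
          have hGpos : 0 < G := by
            rw [hG]
            exact pow_pos (norm_pos_iff.mpr hgz) 2
          have hCpos : (0:ℝ) < 1 + C := by positivity
          set t : ℝ := G / (1 + C) with ht
          have htpos : 0 < t := div_pos hGpos hCpos
          set y := x - t • g x with hy
          have key := gineq₂ x y
          have hfx := h y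
          have hin : ⟪g x, y - x⟫ = - t * G := by
            rw [hy, hG]
            have : x - t • g x - x = -(t • g x) := by abel
            rw [this, inner_neg_right, real_inner_smul_right,
              real_inner_self_eq_norm_sq]
            ring
          have hAn : ‖A y - A x‖ ^ 2 = t ^ 2 * C := by
            rw [hy, hC, map_sub, map_smul]
            have : A x - t • A (g x) - A x = -(t • A (g x)) := by abel
            rw [this, norm_neg, norm_smul, Real.norm_eq_abs, abs_of_pos htpos,
              mul_pow]
          rw [hin, hAn] at key
          -- f x ≤ f y ≤ f x - t G + (1/2) t² C
          have h8 : t * G ≤ t * ((1/2) * t * C) := by nlinarith [key, hfx]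
          have h9 : G ≤ (1/2) * t * C := (mul_le_mul_iff_right₀ htpos).mp h8
          have hfrac : C / (2 * (1 + C)) < 1 := by
            rw [div_lt_one (by positivity)]
            linarith
          have h10 : (1/2) * t * C = G * (C / (2 * (1 + C))) := by
            rw [ht]; field_simp
          have h11 : G * (C / (2 * (1 + C))) < G * 1 :=
            mul_lt_mul_of_pos_left hfrac hGpos
          rw [mul_one] at h11
          rw [h10] at h9
          linarith
      rw [hV x, hBneg, hg0, neg_zero, smul_zero, add_zero]
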